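/- Let G be a finite simple graph, let s = χ_DP(G), and let t be an integer with 1 ≤ t < s. Then α_t^{DP}(G) ≥ (t/s)·|V(G)| or α_{s−t}^{DP}(G) ≥ ((s−t)/s)·|V(G)|. -/

import Mathlib

open SimpleGraph

/-- `DPCover G H L` means `(L, H)` is a cover of the graph `G`:
(1) the sets `L u` partition `V(H)`; (2) each `H[L u]` is complete;
(3) for each edge `uv` of `G`, the edges of `H` between `L u` and `L v` form a matching;
(4) there are no edges of `H` between lists of distinct non-adjacent vertices. -/
structure DPCover {V : Type} (G : SimpleGraph V) {W : Type} (H : SimpleGraph W)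
    (L : V → Finset W) : Prop where
  partition : ∀ w : W, ∃! v : V, w ∈ L v
  cliques : ∀ v : V, ∀ a ∈ L v, ∀ b ∈ L v, a ≠ b → H.Adj a b
  matching : ∀ ⦃u v : V⦄, G.Adj u v → ∀ a ∈ L u, ∀ b ∈ L v, ∀ b' ∈ L v,
      H.Adj a b → H.Adj a b' → b = b'
  nonadj : ∀ ⦃u v : V⦄, u ≠ v → ¬ G.Adj u v → ∀ a ∈ L u, ∀ b ∈ L v, ¬ H.Adj a b

/-- A finset is independent in `H` if no two of its elements are adjacent. -/
def IsIndepFinset {W : Type} (H : SimpleGraph W) (S : Finset W) : Prop :=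
  ∀ a ∈ S, ∀ b ∈ S, ¬ H.Adj a b

/-- The independence number of `H`. -/
noncomputable def indepNum {W : Type} [Fintype W] (H : SimpleGraph W) : ℕ :=
  sSup {n : ℕ | ∃ S : Finset W, IsIndepFinset H S ∧ S.card = n}

/-- The DP-chromatic number of `G`: the least `m` such that every `m`-fold cover `(L, H)`
of `G` admits an `H`-coloring, i.e. an independent set in `H` of size `|V(G)|`. -/
noncomputable def chiDP {V : Type} [Fintype V] (G : SimpleGraph V) : ℕ :=
  sInf {m : ℕ | ∀ (W : Type) (_ : Fintype W) (H : SimpleGraph W) (L : V → Finset W),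
    DPCover G H L → (∀ v, (L v).card = m) →
    ∃ S : Finset W, IsIndepFinset H S ∧ S.card = Fintype.card V}

/-- The partial DP `t`-chromatic number of `G`: the minimum of the independence number
`α(H)` over all `t`-fold covers `(L, H)` of `G`. -/
noncomputable def alphaDP {V : Type} [Fintype V] (G : SimpleGraph V) (t : ℕ) : ℕ :=
  sInf {n : ℕ | ∃ (W : Type) (_ : Fintype W) (H : SimpleGraph W) (L : V → Finset W),
    DPCover G H L ∧ (∀ v, (L v).card = t) ∧ _root_.indepNum H = n}

/-- A graph `G` is partially DP-nice if `α_t^{DP}(G) ≥ t|V(G)|/χ_DP(G)` for all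
`t ∈ {1, …, χ_DP(G)}`. -/
def PartiallyDPNice {V : Type} [Fintype V] (G : SimpleGraph V) : Prop :=
  ∀ t : ℕ, 1 ≤ t → t ≤ chiDP G →
    (t * Fintype.card V : ℚ) / (chiDP G : ℚ) ≤ (alphaDP G t : ℚ)

lemma indep_card_le_indepNum {W : Type} [Fintype W] (H : SimpleGraph W) (S : Finset W)
    (hS : IsIndepFinset H S) : S.card ≤ _root_.indepNum H := by
  apply le_csSup
  · exact ⟨Fintype.card W, by rintro n ⟨T, -, rfl⟩; exact T.card_le_univ⟩
  · exact ⟨S, hS, rfl⟩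

lemma greedy_aux {V W : Type} [Nonempty W]
    (G : SimpleGraph V) (H : SimpleGraph W) (L : V → Finset W) (hc : DPCover G H L)
    (m : ℕ) (hcard : ∀ v, (L v).card = m) :
    ∀ A : Finset V, A.card ≤ m → ∃ f : V → W,
      (∀ v ∈ A, f v ∈ L v) ∧ ∀ u ∈ A, ∀ v ∈ A, u ≠ v → ¬ H.Adj (f u) (f v) := by
  classical
  intro A
  induction A using Finset.induction_on with
  | empty => intro _; exact ⟨fun _ => Classical.arbitrary W, by simp, by simp⟩
  | @insert v A hv ih =>
    intro hcardA
    rw [Finset.card_insert_of_notMem hv] at hcardA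
    obtain ⟨f, hf1, hf2⟩ := ih (by omega)
    set bad := (L v).filter (fun a => ∃ u ∈ A, H.Adj a (f u)) with hbaddef
    have hbadsub : bad ⊆ A.biUnion (fun u => (L v).filter (fun a => H.Adj a (f u))) := by
      intro a ha
      rw [hbaddef, Finset.mem_filter] at ha
      obtain ⟨u, hu, hadj⟩ := ha.2
      exact Finset.mem_biUnion.mpr ⟨u, hu, Finset.mem_filter.mpr ⟨ha.1, hadj⟩⟩
    have hbadcard : bad.card ≤ A.card := by
      refine (Finset.card_le_card hbadsub).trans (Finset.card_biUnion_le.trans ?_)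
      calc ∑ u ∈ A, ((L v).filter (fun a => H.Adj a (f u))).card
          ≤ ∑ _u ∈ A, 1 := by
            apply Finset.sum_le_sum
            intro u hu
            have huv : u ≠ v := ne_of_mem_of_not_mem hu hv
            by_cases hGuv : G.Adj u v
            · rw [Finset.card_le_one]
              intro a ha b hb
              rw [Finset.mem_filter] at ha hb
              exact hc.matching hGuv (f u) (hf1 u hu) a ha.1 b hb.1
                (H.adj_symm ha.2) (H.adj_symm hb.2)
            · rw [Finset.card_le_one]
              intro a ha b hb
              rw [Finset.mem_filter] at ha
              exact absurd (H.adj_symm ha.2) (hc.nonadj huv hGuv (f u) (hf1 u hu) a ha.1)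
        _ = A.card := by simp
    have hlt : bad.card < (L v).card := by rw [hcard v]; omega
    have hsub : bad ⊆ L v := Finset.filter_subset _ _
    have hne : (L v \ bad).Nonempty := by
      rw [← Finset.card_pos, Finset.card_sdiff_of_subset hsub]
      omega
    obtain ⟨a, haZ⟩ := hne
    rw [Finset.mem_sdiff] at haZ
    obtain ⟨haL, hanot⟩ := haZ
    have hanot' : ∀ u ∈ A, ¬ H.Adj a (f u) := by
      intro u hu hadj
      exact hanot (Finset.mem_filter.mpr ⟨haL, u, hu, hadj⟩)
    refine ⟨Function.update f v a, ?_, ?_⟩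
    · intro x hx
      rcases Finset.mem_insert.mp hx with h | hx'
      · subst h; rw [Function.update_self]; exact haL
      · rw [Function.update_of_ne (by rintro rfl; exact hv hx')]; exact hf1 x hx'
    · intro x hx y hy hxy
      rcases Finset.mem_insert.mp hx with hx' | hx' <;>
        rcases Finset.mem_insert.mp hy with hy' | hy'
      · exact absurd (hx'.trans hy'.symm) hxy
      · subst hx'
        rw [Function.update_self, Function.update_of_ne (by rintro rfl; exact hv hy')]
        exact hanot' y hy'
      · subst hy'
        rw [Function.update_self, Function.update_of_ne (by rintro rfl; exact hv hx')]
        exact fun h => hanot' x hx' (H.adj_symm h)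
      · rw [Function.update_of_ne (by rintro rfl; exact hv hx'),
          Function.update_of_ne (by rintro rfl; exact hv hy')]
        exact hf2 x hx' y hy' hxy

lemma cardV_mem_chiDP_set {V : Type} [Fintype V] (G : SimpleGraph V) :
    ∀ (W : Type) (_ : Fintype W) (H : SimpleGraph W) (L : V → Finset W),
      DPCover G H L → (∀ v, (L v).card = Fintype.card V) →
      ∃ S : Finset W, IsIndepFinset H S ∧ S.card = Fintype.card V := by
  intro W _ H L hc hcard
  classical
  by_cases hV : Fintype.card V = 0
  · exact ⟨∅, by intro a ha; simp at ha, by simp [hV]⟩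
  · have hVne : Nonempty V := Fintype.card_pos_iff.mp (Nat.pos_of_ne_zero hV)
    have hW : Nonempty W := by
      obtain ⟨v⟩ := hVne
      have : (L v).Nonempty := by
        rw [← Finset.card_pos, hcard v]; exact Nat.pos_of_ne_zero hV
      exact ⟨this.choose⟩
    obtain ⟨f, hf1, hf2⟩ := greedy_aux G H L hc _ hcard Finset.univ (by simp)
    refine ⟨Finset.univ.image f, ?_, ?_⟩
    · intro a ha b hb hadj
      obtain ⟨u, -, rfl⟩ := Finset.mem_image.mp ha
      obtain ⟨x, -, rfl⟩ := Finset.mem_image.mp hb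
      by_cases hux : u = x
      · subst hux; exact H.irrefl hadj
      · exact hf2 u (Finset.mem_univ u) x (Finset.mem_univ x) hux hadj
    · rw [Finset.card_image_of_injOn, Finset.card_univ]
      intro u _ x _ hfeq
      exact (hc.partition (f u)).unique (hf1 u (Finset.mem_univ u))
        (by rw [hfeq]; exact hf1 x (Finset.mem_univ x))

lemma alphaDP_set_nonempty {V : Type} [Fintype V] (G : SimpleGraph V) (t : ℕ) :
    {n : ℕ | ∃ (W : Type) (_ : Fintype W) (H : SimpleGraph W) (L : V → Finset W),
      DPCover G H L ∧ (∀ v, (L v).card = t) ∧ _root_.indepNum H = n}.Nonempty := by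
  classical
  refine ⟨_, V × Fin t, inferInstance,
    ⟨fun a b => a.1 = b.1 ∧ a ≠ b,
      ⟨fun a b h => ⟨h.1.symm, h.2.symm⟩⟩,
      ⟨fun a h => h.2 rfl⟩⟩,
    fun v => {v} ×ˢ Finset.univ, ⟨?_, ?_, ?_, ?_⟩, ?_, rfl⟩
  · intro w
    refine ⟨w.1, ?_, ?_⟩
    · simp only [Finset.mem_product, Finset.mem_singleton, Finset.mem_univ, and_true]
    · intro y hy
      simp only [Finset.mem_product, Finset.mem_singleton, Finset.mem_univ, and_true] at hy
      exact hy.symm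
  · intro v a ha b hb hne
    simp only [Finset.mem_product, Finset.mem_singleton, Finset.mem_univ, and_true] at ha hb
    exact ⟨ha.trans hb.symm, hne⟩
  · intro u v huv a ha b hb b' hb' h h'
    simp only [Finset.mem_product, Finset.mem_singleton, Finset.mem_univ, and_true] at ha hb
    exact absurd (ha ▸ hb ▸ h.1) huv.ne
  · intro u v hne hG a ha b hb h
    simp only [Finset.mem_product, Finset.mem_singleton, Finset.mem_univ, and_true] at ha hb
    exact hne (ha ▸ hb ▸ h.1)
  · intro v; simp

def sumGraph {V W W' : Type} (H : SimpleGraph W) (H' : SimpleGraph W')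
    (L : V → Finset W) (L' : V → Finset W') : SimpleGraph (W ⊕ W') where
  Adj x y :=
    match x, y with
    | Sum.inl a, Sum.inl b => H.Adj a b
    | Sum.inr a, Sum.inr b => H'.Adj a b
    | Sum.inl a, Sum.inr b => ∃ v, a ∈ L v ∧ b ∈ L' v
    | Sum.inr a, Sum.inl b => ∃ v, b ∈ L v ∧ a ∈ L' v
  symm := ⟨by rintro (a|a) (b|b) h <;> first | exact H.adj_symm h | exact H'.adj_symm h | exact h⟩
  loopless := ⟨by rintro (a|a) h <;> first | exact H.irrefl h | exact H'.irrefl h⟩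

lemma sumCover {V W W' : Type} {G : SimpleGraph V} {H : SimpleGraph W} {H' : SimpleGraph W'}
    {L : V → Finset W} {L' : V → Finset W'} (hc : DPCover G H L) (hc' : DPCover G H' L') :
    DPCover G (sumGraph H H' L L') (fun v => (L v).disjSum (L' v)) := by
  have cross : ∀ {u v : V} (a : W) (b : W'), u ≠ v → a ∈ L u → b ∈ L' v →
      ¬ ∃ x, a ∈ L x ∧ b ∈ L' x := by
    rintro u v a b hne ha hb ⟨x, hxa, hxb⟩
    exact hne (((hc.partition a).unique ha hxa).trans ((hc'.partition b).unique hxb hb))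
  constructor
  · rintro (a|a)
    · obtain ⟨v, hv, huni⟩ := hc.partition a
      exact ⟨v, Finset.inl_mem_disjSum.mpr hv, fun y hy => huni y (Finset.inl_mem_disjSum.mp hy)⟩
    · obtain ⟨v, hv, huni⟩ := hc'.partition a
      exact ⟨v, Finset.inr_mem_disjSum.mpr hv, fun y hy => huni y (Finset.inr_mem_disjSum.mp hy)⟩
  · rintro v (a|a) ha (b|b) hb hne
    · exact hc.cliques v a (Finset.inl_mem_disjSum.mp ha) b (Finset.inl_mem_disjSum.mp hb)
        (fun h => hne (congrArg Sum.inl h))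
    · exact ⟨v, Finset.inl_mem_disjSum.mp ha, Finset.inr_mem_disjSum.mp hb⟩
    · exact ⟨v, Finset.inl_mem_disjSum.mp hb, Finset.inr_mem_disjSum.mp ha⟩
    · exact hc'.cliques v a (Finset.inr_mem_disjSum.mp ha) b (Finset.inr_mem_disjSum.mp hb)
        (fun h => hne (congrArg Sum.inr h))
  · rintro u v huv (a|a) ha (b|b) hb (b'|b') hb' hab hab'
    · exact congrArg Sum.inl (hc.matching huv a (Finset.inl_mem_disjSum.mp ha)
        b (Finset.inl_mem_disjSum.mp hb) b' (Finset.inl_mem_disjSum.mp hb') hab hab')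
    · exact absurd hab' (cross a b' huv.ne (Finset.inl_mem_disjSum.mp ha)
        (Finset.inr_mem_disjSum.mp hb'))
    · exact absurd hab (cross a b huv.ne (Finset.inl_mem_disjSum.mp ha)
        (Finset.inr_mem_disjSum.mp hb))
    · exact absurd hab (cross a b huv.ne (Finset.inl_mem_disjSum.mp ha)
        (Finset.inr_mem_disjSum.mp hb))
    · exact absurd hab (cross b a huv.ne.symm (Finset.inl_mem_disjSum.mp hb)
        (Finset.inr_mem_disjSum.mp ha))
    · exact absurd hab (cross b a huv.ne.symm (Finset.inl_mem_disjSum.mp hb)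
        (Finset.inr_mem_disjSum.mp ha))
    · exact absurd hab' (cross b' a huv.ne.symm (Finset.inl_mem_disjSum.mp hb')
        (Finset.inr_mem_disjSum.mp ha))
    · exact congrArg Sum.inr (hc'.matching huv a (Finset.inr_mem_disjSum.mp ha)
        b (Finset.inr_mem_disjSum.mp hb) b' (Finset.inr_mem_disjSum.mp hb') hab hab')
  · rintro u v hne hG (a|a) ha (b|b) hb hadj
    · exact hc.nonadj hne hG a (Finset.inl_mem_disjSum.mp ha) b (Finset.inl_mem_disjSum.mp hb) hadj
    · exact cross a b hne (Finset.inl_mem_disjSum.mp ha) (Finset.inr_mem_disjSum.mp hb) hadj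
    · exact cross b a hne.symm (Finset.inl_mem_disjSum.mp hb) (Finset.inr_mem_disjSum.mp ha) hadj
    · exact hc'.nonadj hne hG a (Finset.inr_mem_disjSum.mp ha) b (Finset.inr_mem_disjSum.mp hb) hadj

/-- For `1 ≤ t < s = χ_DP(G)`, either `α_t^{DP}(G) ≥ (t/s)|V(G)|` or
`α_{s−t}^{DP}(G) ≥ ((s−t)/s)|V(G)|`. -/
theorem alphaDP_or_alphaDP_compl {V : Type} [Fintype V] (G : SimpleGraph V)
    (t : ℕ) (h1 : 1 ≤ t) (h2 : t < chiDP G) :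
    ((t : ℚ) / (chiDP G : ℚ)) * (Fintype.card V : ℚ) ≤ (alphaDP G t : ℚ) ∨
    (((chiDP G - t : ℕ) : ℚ) / (chiDP G : ℚ)) * (Fintype.card V : ℚ) ≤
      (alphaDP G (chiDP G - t) : ℚ) := by
  classical
  by_cases hα : ((t : ℚ) / (chiDP G : ℚ)) * (Fintype.card V : ℚ) ≤ (alphaDP G t : ℚ)
  · exact Or.inl hα
  right
  push_neg at hα
  have hs0 : 0 < chiDP G := lt_of_le_of_lt (Nat.zero_le t) h2
  have hsQ : (0 : ℚ) < (chiDP G : ℚ) := by exact_mod_cast hs0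
  obtain ⟨W, instW, H, L, hcov, hLcard, hind⟩ :
      alphaDP G t ∈ {n : ℕ | ∃ (W : Type) (_ : Fintype W) (H : SimpleGraph W)
        (L : V → Finset W), DPCover G H L ∧ (∀ v, (L v).card = t) ∧ _root_.indepNum H = n} :=
    Nat.sInf_mem (alphaDP_set_nonempty G t)
  obtain ⟨W', instW', H', L', hcov', hLcard', hind'⟩ :
      alphaDP G (chiDP G - t) ∈ {n : ℕ | ∃ (W : Type) (_ : Fintype W) (H : SimpleGraph W)
        (L : V → Finset W), DPCover G H L ∧ (∀ v, (L v).card = chiDP G - t) ∧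
        _root_.indepNum H = n} :=
    Nat.sInf_mem (alphaDP_set_nonempty G (chiDP G - t))
  have hcomb := sumCover hcov hcov'
  have hcards : ∀ v, ((L v).disjSum (L' v)).card = chiDP G := by
    intro v
    rw [Finset.card_disjSum, hLcard v, hLcard' v]
    omega
  have hchis : chiDP G ∈ {m : ℕ | ∀ (W : Type) (_ : Fintype W) (H : SimpleGraph W)
      (L : V → Finset W), DPCover G H L → (∀ v, (L v).card = m) →
      ∃ S : Finset W, IsIndepFinset H S ∧ S.card = Fintype.card V} :=
    Nat.sInf_mem ⟨Fintype.card V, cardV_mem_chiDP_set G⟩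
  obtain ⟨S, hSind, hScard⟩ :=
    hchis (W ⊕ W') inferInstance (sumGraph H H' L L') (fun v => (L v).disjSum (L' v))
      hcomb hcards
  have hL : IsIndepFinset H S.toLeft := by
    intro a ha b hb hadj
    exact hSind _ (Finset.mem_toLeft.mp ha) _ (Finset.mem_toLeft.mp hb) hadj
  have hR : IsIndepFinset H' S.toRight := by
    intro a ha b hb hadj
    exact hSind _ (Finset.mem_toRight.mp ha) _ (Finset.mem_toRight.mp hb) hadj
  have h1' : S.toLeft.card ≤ alphaDP G t := hind ▸ indep_card_le_indepNum H S.toLeft hL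
  have h2' : S.toRight.card ≤ alphaDP G (chiDP G - t) :=
    hind' ▸ indep_card_le_indepNum H' S.toRight hR
  have hsum : S.toLeft.card + S.toRight.card = Fintype.card V := by
    rw [Finset.card_toLeft_add_card_toRight, hScard]
  have hcast : ((chiDP G - t : ℕ) : ℚ) = (chiDP G : ℚ) - (t : ℚ) := by
    push_cast [Nat.cast_sub h2.le]
    ring
  rw [hcast]
  have key : ((chiDP G : ℚ) - t) / (chiDP G : ℚ) * (Fintype.card V : ℚ) =
      (Fintype.card V : ℚ) - (t : ℚ) / (chiDP G : ℚ) * (Fintype.card V : ℚ) := by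
    field_simp
  rw [key]
  have c1 : (S.toLeft.card : ℚ) ≤ (alphaDP G t : ℚ) := by exact_mod_cast h1'
  have c2 : (S.toRight.card : ℚ) ≤ (alphaDP G (chiDP G - t) : ℚ) := by exact_mod_cast h2'
  have csum : (S.toLeft.card : ℚ) + (S.toRight.card : ℚ) = (Fintype.card V : ℚ) := by
    exact_mod_cast hsum
  linarith
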